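/- Let Q be an IPSTN problem defined by a phylogeny ⟨V,E,I,S,f⟩ with root R and a function v ↦ (τ_min(v), τ_max(v)). If a set X of 2-element subsets of V↑ is a solution to Q, then X is admissible and there exists a real-valued function τ on V ∪ V_X such that (a) for every v ∈ V, τ_min(v) < τ(v) < τ_max(v); (b) for every v ∈ V \ {R}, τ(par(v)) < τ(v); (c) for every element v↑ of V_X, τ(par(v)) < τ(v↑) < τ(v); and (d) for every element {u↑, v↑} of X, τ(u↑) = τ(v↑). -/
import Mathlib


namespace Phylo

variable {α : Type*} {ι : Type*} {σ : Type*}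

/-- `y` is reachable from `x` by a directed path along edges in `E`,
all of whose vertices belong to `W`. -/
def ReachableIn (E : Set (α × α)) (W : Set α) (x y : α) : Prop :=
  ∃ (n : ℕ) (p : ℕ → α), p 0 = x ∧ p n = y ∧ (∀ j ≤ n, p j ∈ W) ∧
    ∀ j < n, (p j, p (j + 1)) ∈ E

/-- `⟨V,E⟩` is a finite rooted tree with root `R`: a finite digraph with a vertex `R`
of in-degree 0 such that every vertex different from `R` has in-degree 1 and is
reachable from `R`. -/
structure IsRootedTree (V : Set α) (E : Set (α × α)) (R : α) : Prop where
  finite : V.Finite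
  edge_fst_mem : ∀ e ∈ E, e.1 ∈ V
  edge_snd_mem : ∀ e ∈ E, e.2 ∈ V
  edge_ne : ∀ e ∈ E, e.1 ≠ e.2
  root_mem : R ∈ V
  root_no_parent : ∀ u, (u, R) ∉ E
  parent_unique : ∀ v ∈ V, v ≠ R → ∃! u, (u, v) ∈ E
  root_reaches : ∀ v ∈ V, ReachableIn E V R v

/-- The digraph with edge set `F` has a subgraph with vertex set `W` that is
a rooted tree. -/
def HasRootedSubtree (F : Set (α × α)) (W : Set α) : Prop :=
  ∃ F' ⊆ F, (∀ e ∈ F', e.1 ∈ W ∧ e.2 ∈ W) ∧ ∃ r, IsRootedTree W F' r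

/-- `v` is a leaf of `⟨V,E⟩`: a vertex of out-degree 0. -/
def IsLeaf (V : Set α) (E : Set (α × α)) (v : α) : Prop :=
  v ∈ V ∧ ∀ u, (v, u) ∉ E

/-! Networks built from a set `X` of 2-element subsets of `V↑`.
A symbol `v↑` is represented by `Sum.inr v : α ⊕ α`, while a vertex `v` of the
tree is represented by `Sum.inl v`.  An unordered pair `{u↑, v↑}` is represented
by `s(u, v) : Sym2 α`. -/

/-- `V_X`: the union of the elements of `X`. -/
def VXset (X : Set (Sym2 α)) : Set α := {v | ∃ e ∈ X, v ∈ e}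

/-- Lateral edges of the network determined by `X`: the edges `⟨u↑, v↑⟩` and
`⟨v↑, u↑⟩` for `{u↑, v↑} ∈ X`. -/
def IsLateralEdgeX (X : Set (Sym2 α)) (e : (α ⊕ α) × (α ⊕ α)) : Prop :=
  ∃ u v, s(u, v) ∈ X ∧ e = (Sum.inr u, Sum.inr v)

/-- `E_X`: obtained from `E` by replacing, for each `v↑ ∈ V_X`, the edge
`⟨par v, v⟩` with `⟨par v, v↑⟩` and `⟨v↑, v⟩`, and adding, for each
`{u↑, v↑} ∈ X`, the lateral edges `⟨u↑, v↑⟩` and `⟨v↑, u↑⟩`. -/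
def EXset (E : Set (α × α)) (par : α → α) (X : Set (Sym2 α)) :
    Set ((α ⊕ α) × (α ⊕ α)) :=
  {e | (∃ u v, (u, v) ∈ E ∧ v ∉ VXset X ∧ e = (Sum.inl u, Sum.inl v)) ∨
       (∃ v ∈ VXset X, e = (Sum.inl (par v), Sum.inr v)) ∨
       (∃ v ∈ VXset X, e = (Sum.inr v, Sum.inl v)) ∨
       IsLateralEdgeX X e}

/-- The vertex set `V ∪ V_X` of the network determined by `X`. -/
def netVertsX (V : Set α) (X : Set (Sym2 α)) : Set (α ⊕ α) :=
  Sum.inl '' V ∪ Sum.inr '' VXset X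

/-- `X` is admissible: there is a function `g : (V ∪ V_X) × I → S` agreeing with
`f` on leaves such that every nonempty set `V_is = {x : g(x,i) = s}` carries a
rooted subtree of the network `⟨V ∪ V_X, E_X⟩`. -/
def Admissible (V : Set α) (E : Set (α × α)) (par : α → α)
    (f : α → ι → σ) (X : Set (Sym2 α)) : Prop :=
  ∃ g : α ⊕ α → ι → σ,
    (∀ v, IsLeaf V E v → ∀ i, g (Sum.inl v) i = f v i) ∧
    ∀ i s, ({x ∈ netVertsX V X | g x i = s}).Nonempty →
      HasRootedSubtree (EXset E par X) {x ∈ netVertsX V X | g x i = s}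

/-! Events, contacts and the networks they determine.  An event `v↑t` is
represented by the pair `(v, t) : α × ℝ`; in a network it appears as
`Sum.inr (v, t) : α ⊕ (α × ℝ)`. -/

/-- `(v, t)` is an event of the temporal phylogeny with time function `τ`:
`v ∈ V \ {R}` and `τ(par v) < t ≤ τ(v)`. -/
def IsEvent (V : Set α) (R : α) (par : α → α) (τ : α → ℝ) (p : α × ℝ) : Prop :=
  p.1 ∈ V ∧ p.1 ≠ R ∧ τ (par p.1) < p.2 ∧ p.2 ≤ τ p.1

/-- A contact: a set of two different concurrent events. -/
def IsContact (V : Set α) (R : α) (par : α → α) (τ : α → ℝ)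
    (c : Sym2 (α × ℝ)) : Prop :=
  ¬ c.IsDiag ∧ (∀ p ∈ c, IsEvent V R par τ p) ∧ ∀ p ∈ c, ∀ q ∈ c, p.2 = q.2

/-- `V_C`: the union of the contacts in `C`. -/
def VCset (C : Set (Sym2 (α × ℝ))) : Set (α × ℝ) := {p | ∃ c ∈ C, p ∈ c}

/-- `C` is a simple set of contacts for the temporal phylogeny with time
function `τ`: a finite set of contacts such that `t < τ(v)` for every event
`v↑t` in `V_C`, and for every vertex `v` there is at most one `t` with
`v↑t ∈ V_C`. -/
def SimpleContacts (V : Set α) (R : α) (par : α → α) (τ : α → ℝ)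
    (C : Set (Sym2 (α × ℝ))) : Prop :=
  C.Finite ∧ (∀ c ∈ C, IsContact V R par τ c) ∧
    (∀ p ∈ VCset C, p.2 < τ p.1) ∧
    ∀ v t t', (v, t) ∈ VCset C → (v, t') ∈ VCset C → t = t'

/-- Lateral edges of the network determined by `C`. -/
def IsLateralEdgeC (C : Set (Sym2 (α × ℝ)))
    (e : (α ⊕ (α × ℝ)) × (α ⊕ (α × ℝ))) : Prop :=
  ∃ p q, s(p, q) ∈ C ∧ e = (Sum.inr p, Sum.inr q)

/-- `E_C`: obtained from `E` by replacing, for each event `v↑t ∈ V_C`, the edge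
`⟨par v, v⟩` with `⟨par v, v↑t⟩` and `⟨v↑t, v⟩`, and adding, for each contact
`{u↑t, v↑t} ∈ C`, the lateral edges `⟨u↑t, v↑t⟩` and `⟨v↑t, u↑t⟩`. -/
def ECset (E : Set (α × α)) (par : α → α) (C : Set (Sym2 (α × ℝ))) :
    Set ((α ⊕ (α × ℝ)) × (α ⊕ (α × ℝ))) :=
  {e | (∃ u v, (u, v) ∈ E ∧ (∀ t, (v, t) ∉ VCset C) ∧ e = (Sum.inl u, Sum.inl v)) ∨
       (∃ p ∈ VCset C, e = (Sum.inl (par p.1), Sum.inr p)) ∨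
       (∃ p ∈ VCset C, e = (Sum.inr p, Sum.inl p.1)) ∨
       IsLateralEdgeC C e}

/-- The vertex set `V ∪ V_C` of the network determined by `C`. -/
def netVertsC (V : Set α) (C : Set (Sym2 (α × ℝ))) : Set (α ⊕ (α × ℝ)) :=
  Sum.inl '' V ∪ Sum.inr '' VCset C

/-- `C` is perfect: there is `g : (V ∪ V_C) × I → S` agreeing with `f` on the
leaves such that every nonempty set `V_is = {x : g(x,i) = s}` carries a rooted
subtree of the network `⟨V ∪ V_C, E_C⟩`. -/
def PerfectContacts (V : Set α) (E : Set (α × α)) (par : α → α)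
    (f : α → ι → σ) (C : Set (Sym2 (α × ℝ))) : Prop :=
  ∃ g : α ⊕ (α × ℝ) → ι → σ,
    (∀ v, IsLeaf V E v → ∀ i, g (Sum.inl v) i = f v i) ∧
    ∀ i s, ({x ∈ netVertsC V C | g x i = s}).Nonempty →
      HasRootedSubtree (ECset E par C) {x ∈ netVertsC V C | g x i = s}

/-- The summary of a set of contacts: each event `v↑t` is replaced by `v↑`. -/
def summary (C : Set (Sym2 (α × ℝ))) : Set (Sym2 α) :=
  Sym2.map Prod.fst '' C

/-- `X` is a solution to the IPSTN problem given by the phylogeny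
`⟨V,E,I,S,f⟩` (with root `R` and parent function `par`) and the intervals
`(τmin v, τmax v)`: `X` is a set of 2-element subsets of `V↑` that is the
summary of a perfect simple set of contacts for a temporal phylogeny
`⟨V,E,I,S,f,τ⟩` with `τmin v < τ v < τmax v` for all `v ∈ V`. -/
def IsSolution (V : Set α) (E : Set (α × α)) (R : α) (par : α → α)
    (f : α → ι → σ) (τmin τmax : α → EReal) (X : Set (Sym2 α)) : Prop :=
  (∀ e ∈ X, ¬ e.IsDiag ∧ ∀ v ∈ e, v ∈ V ∧ v ≠ R) ∧
  ∃ τ : α → ℝ,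
    (∀ e ∈ E, τ e.1 < τ e.2) ∧
    (∀ v ∈ V, τmin v < (τ v : EReal) ∧ (τ v : EReal) < τmax v) ∧
    ∃ C : Set (Sym2 (α × ℝ)),
      SimpleContacts V R par τ C ∧ PerfectContacts V E par f C ∧ X = summary C

/-- Condition (ii) of Proposition 1: a real-valued function `τ` on `V ∪ V_X`
(represented as a function on `α ⊕ α`, with `Sum.inl v` standing for `v` and
`Sum.inr v` for `v↑`) satisfying (a)–(d). -/
def TimeAssignment (V : Set α) (R : α) (par : α → α)
    (τmin τmax : α → EReal) (X : Set (Sym2 α)) (τ : α ⊕ α → ℝ) : Prop :=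
  (∀ v ∈ V, τmin v < (τ (Sum.inl v) : EReal) ∧ (τ (Sum.inl v) : EReal) < τmax v) ∧
  (∀ v ∈ V, v ≠ R → τ (Sum.inl (par v)) < τ (Sum.inl v)) ∧
  (∀ v ∈ VXset X, τ (Sum.inl (par v)) < τ (Sum.inr v) ∧ τ (Sum.inr v) < τ (Sum.inl v)) ∧
  ∀ u v, s(u, v) ∈ X → τ (Sum.inr u) = τ (Sum.inr v)


section Aux

variable {β : Type*}

lemma reachableIn_map (φ : α → β) {F : Set (α × α)} {W : Set α} {x y : α}
    (h : ReachableIn F W x y) :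
    ReachableIn ((fun e => (φ e.1, φ e.2)) '' F) (φ '' W) (φ x) (φ y) := by
  obtain ⟨n, p, h0, hn, hW, hE⟩ := h
  exact ⟨n, φ ∘ p, by simp [h0], by simp [hn],
    fun j hj => ⟨p j, hW j hj, rfl⟩,
    fun j hj => ⟨(p j, p (j + 1)), hE j hj, rfl⟩⟩

lemma isRootedTree_map {φ : α → β} {W : Set α} {F : Set (α × α)} {r : α}
    (hinj : Set.InjOn φ W) (h : IsRootedTree W F r) :
    IsRootedTree (φ '' W) ((fun e => (φ e.1, φ e.2)) '' F) (φ r) := by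
  constructor
  · exact h.finite.image φ
  · rintro e ⟨a, ha, rfl⟩; exact ⟨a.1, h.edge_fst_mem a ha, rfl⟩
  · rintro e ⟨a, ha, rfl⟩; exact ⟨a.2, h.edge_snd_mem a ha, rfl⟩
  · rintro e ⟨a, ha, rfl⟩ heq
    exact h.edge_ne a ha (hinj (h.edge_fst_mem a ha) (h.edge_snd_mem a ha) heq)
  · exact ⟨r, h.root_mem, rfl⟩
  · rintro u ⟨a, ha, heq⟩
    have h2 : φ a.2 = φ r := congrArg Prod.snd heq
    have : a.2 = r := hinj (h.edge_snd_mem a ha) h.root_mem h2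
    exact h.root_no_parent a.1 (by rwa [← this, Prod.mk.eta])
  · rintro v' ⟨v, hv, rfl⟩ hne
    have hvr : v ≠ r := fun hh => hne (by rw [hh])
    obtain ⟨u, hu, huniq⟩ := h.parent_unique v hv hvr
    refine ⟨φ u, ⟨(u, v), hu, rfl⟩, ?_⟩
    rintro u' ⟨a, ha, heq⟩
    have h2 : φ a.2 = φ v := congrArg Prod.snd heq
    have ha2 : a.2 = v := hinj (h.edge_snd_mem a ha) hv h2
    have : (a.1, v) ∈ F := by rwa [← ha2, Prod.mk.eta]
    have h1 : φ a.1 = u' := congrArg Prod.fst heq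
    have : a.1 = u := huniq a.1 this
    rw [← h1, this]
  · rintro v' ⟨v, hv, rfl⟩; exact reachableIn_map φ (h.root_reaches v hv)

lemma mem_VX_summary {C : Set (Sym2 (α × ℝ))} {v : α} :
    v ∈ VXset (summary C) ↔ ∃ t, (v, t) ∈ VCset C := by
  constructor
  · rintro ⟨e, ⟨c, hc, rfl⟩, hv⟩
    rw [Sym2.mem_map] at hv
    obtain ⟨p, hp, rfl⟩ := hv
    exact ⟨p.2, c, hc, hp⟩
  · rintro ⟨t, c, hc, hp⟩
    exact ⟨Sym2.map Prod.fst c, ⟨c, hc, rfl⟩, Sym2.mem_map.2 ⟨(v, t), hp, rfl⟩⟩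

end Aux

/-- Proposition 1, left-to-right.  If `X` is a solution to the
IPSTN problem `Q`, then `X` is admissible and there is a real-valued function
`τ` on `V ∪ V_X` satisfying (a)–(d). -/
theorem ipstn_solution_implies_admissible_and_timeAssignment
    {α ι σ : Type*} [Finite ι] [Finite σ]
    (V : Set α) (E : Set (α × α)) (R : α) (par : α → α) (f : α → ι → σ)
    (τmin τmax : α → EReal)
    (hT : IsRootedTree V E R)
    (hpar : ∀ v ∈ V, v ≠ R → (par v, v) ∈ E)
    (hint : ∀ v ∈ V, τmin v < τmax v)
    (X : Set (Sym2 α))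
    (hX : ∀ e ∈ X, ¬ e.IsDiag ∧ ∀ v ∈ e, v ∈ V ∧ v ≠ R)
    (hsol : IsSolution V E R par f τmin τmax X) :
    Admissible V E par f X ∧
      ∃ τ : α ⊕ α → ℝ, TimeAssignment V R par τmin τmax X τ := by
  classical
  obtain ⟨hX', τ, hτE, hτbound, C, ⟨hCfin, hCcontact, hCτ, hCuniq⟩, hPerf, hXC⟩ := hsol
  -- the chosen time of each `v↑`
  set t0 : α → ℝ := fun v => if h : ∃ t, (v, t) ∈ VCset C then h.choose else 0 with ht0def
  have ht0 : ∀ v t, (v, t) ∈ VCset C → t0 v = t := by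
    intro v t ht
    have hex : ∃ t, (v, t) ∈ VCset C := ⟨t, ht⟩
    simp only [ht0def, dif_pos hex]
    exact hCuniq v hex.choose t hex.choose_spec ht
  have hmemVX : ∀ v, v ∈ VXset X ↔ ∃ t, (v, t) ∈ VCset C := by
    intro v; rw [hXC]; exact mem_VX_summary
  have hVCevent : ∀ p ∈ VCset C, IsEvent V R par τ p := by
    rintro p ⟨c, hc, hpc⟩
    exact (hCcontact c hc).2.1 p hpc
  have ht0mem : ∀ v ∈ VXset X, (v, t0 v) ∈ VCset C := by
    intro v hv
    obtain ⟨t, ht⟩ := (hmemVX v).1 hv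
    rw [ht0 v t ht]; exact ht
  constructor
  · -- Admissibility
    obtain ⟨gC, hgleaf, hgtree⟩ := hPerf
    set φ : α ⊕ (α × ℝ) → α ⊕ α := Sum.map id Prod.fst with hφdef
    set ψ : α ⊕ α → α ⊕ (α × ℝ) := Sum.map id (fun v => (v, t0 v)) with hψdef
    have hφψ : ∀ x, φ (ψ x) = x := by rintro (v | v) <;> rfl
    have hinrC : ∀ p : α × ℝ, Sum.inr p ∈ netVertsC V C → p ∈ VCset C := by
      rintro p (⟨v, _, hv⟩ | ⟨q, hq, hv⟩)
      · exact absurd hv (by simp)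
      · rw [Sum.inr.injEq] at hv; rwa [hv] at hq
    have hinrX : ∀ v : α, Sum.inr v ∈ netVertsX V X → v ∈ VXset X := by
      rintro v (⟨u, _, hu⟩ | ⟨u, hu, huv⟩)
      · exact absurd hu (by simp)
      · rw [Sum.inr.injEq] at huv; rwa [huv] at hu
    have hinlV : ∀ v : α, Sum.inl v ∈ netVertsC V C → v ∈ V := by
      rintro v (⟨u, hu, huv⟩ | ⟨p, _, hp⟩)
      · rw [Sum.inl.injEq] at huv; rwa [huv] at hu
      · exact absurd hp (by simp)
    have hψφ : ∀ x ∈ netVertsC V C, ψ (φ x) = x := by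
      rintro (v | p) hx
      · rfl
      · have hp : p ∈ VCset C := hinrC p hx
        simp only [hφdef, hψdef, Sum.map_inr]
        rw [ht0 p.1 p.2 hp]
    have hφnet : ∀ x ∈ netVertsC V C, φ x ∈ netVertsX V X := by
      rintro (v | p) hx
      · exact Or.inl ⟨v, hinlV v hx, rfl⟩
      · exact Or.inr ⟨p.1, (hmemVX p.1).2 ⟨p.2, hinrC p hx⟩, rfl⟩
    have hψnet : ∀ x ∈ netVertsX V X, ψ x ∈ netVertsC V C := by
      rintro (v | v) hx
      · rcases hx with ⟨u, hu, huv⟩ | ⟨u, _, hu⟩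
        · rw [Sum.inl.injEq] at huv
          exact Or.inl ⟨v, huv ▸ hu, rfl⟩
        · exact absurd hu (by simp)
      · exact Or.inr ⟨(v, t0 v), ht0mem v (hinrX v hx), rfl⟩
    refine ⟨fun x i => gC (ψ x) i, fun v _ i => hgleaf v ‹_› i, ?_⟩
    intro i s hne
    obtain ⟨x, hxnet, hxs⟩ := hne
    have hneC : ({y ∈ netVertsC V C | gC y i = s}).Nonempty :=
      ⟨ψ x, hψnet x hxnet, hxs⟩
    obtain ⟨F', hF'sub, hF'end, r, hF'tree⟩ := hgtree i s hneC
    set WC := {y ∈ netVertsC V C | gC y i = s} with hWCdef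
    have himg : φ '' WC = {x ∈ netVertsX V X | gC (ψ x) i = s} := by
      apply Set.eq_of_subset_of_subset
      · rintro _ ⟨y, ⟨hynet, hys⟩, rfl⟩
        exact ⟨hφnet y hynet, by rw [hψφ y hynet]; exact hys⟩
      · rintro x ⟨hxnet, hxs⟩
        exact ⟨ψ x, ⟨hψnet x hxnet, hxs⟩, hφψ x⟩
    have hinj : Set.InjOn φ WC := by
      intro a ha b hb hab
      rw [← hψφ a ha.1, ← hψφ b hb.1, hab]
    refine ⟨(fun e => (φ e.1, φ e.2)) '' F', ?_, ?_, φ r, ?_⟩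
    · rintro _ ⟨e, he, rfl⟩
      rcases hF'sub he with ⟨u, v, huv, hvt, rfl⟩ | ⟨p, hp, rfl⟩ | ⟨p, hp, rfl⟩ |
        ⟨p, q, hpq, rfl⟩
      · exact Or.inl ⟨u, v, huv, fun hv => (hvt (t0 v)) (ht0mem v hv), rfl⟩
      · exact Or.inr (Or.inl ⟨p.1, (hmemVX p.1).2 ⟨p.2, hp⟩, rfl⟩)
      · exact Or.inr (Or.inr (Or.inl ⟨p.1, (hmemVX p.1).2 ⟨p.2, hp⟩, rfl⟩))
      · refine Or.inr (Or.inr (Or.inr ⟨p.1, q.1, ?_, rfl⟩))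
        rw [hXC]
        exact ⟨s(p, q), hpq, by rw [Sym2.map_pair_eq]⟩
    · rintro _ ⟨e, he, rfl⟩
      have h1 : φ e.1 ∈ φ '' WC := ⟨e.1, (hF'end e he).1, rfl⟩
      have h2 : φ e.2 ∈ φ '' WC := ⟨e.2, (hF'end e he).2, rfl⟩
      rw [himg] at h1 h2
      exact ⟨h1, h2⟩
    · have := isRootedTree_map hinj hF'tree
      rw [himg] at this
      exact this
  · -- Time assignment
    refine ⟨Sum.elim τ t0, fun v hv => hτbound v hv, ?_, ?_, ?_⟩
    · intro v hv hvR
      exact hτE (par v, v) (hpar v hv hvR)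
    · intro v hv
      have hp := ht0mem v hv
      have hev := hVCevent (v, t0 v) hp
      exact ⟨hev.2.2.1, hCτ (v, t0 v) hp⟩
    · intro u v huv
      rw [hXC] at huv
      obtain ⟨c, hc, hmap⟩ := huv
      induction c using Sym2.ind with
      | _ p q =>
        rw [Sym2.map_pair_eq, Sym2.eq_iff] at hmap
        have hpmem : (p.1, p.2) ∈ VCset C := ⟨s(p, q), hc, by simp⟩
        have hqmem : (q.1, q.2) ∈ VCset C := ⟨s(p, q), hc, by simp⟩
        have heqt : p.2 = q.2 :=
          (hCcontact _ hc).2.2 p (by simp) q (by simp)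
        rcases hmap with ⟨h1, h2⟩ | ⟨h1, h2⟩
        · simp only [Sum.elim_inr]
          rw [ht0 u p.2 (h1 ▸ hpmem), ht0 v q.2 (h2 ▸ hqmem), heqt]
        · simp only [Sum.elim_inr]
          rw [ht0 u q.2 (h2 ▸ hqmem), ht0 v p.2 (h1 ▸ hpmem), heqt]

end Phylo
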